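/- Let N be an l×n integer matrix with non-negative entries and M an m×n integer matrix with ker_Z(N) ⊆ ker_Z(M). Let φ: K[x_1,...,x_n] → K[t_1,...,t_l] be the monomial map with kernel I_N, and suppose f_1,...,f_s ∈ I_M satisfy rad(φ(I_M)K[t]) = rad(φ(f_1),...,φ(f_s)). If additionally the toric set Γ(N) equals V(I_N) over the algebraic closure of K, then I_M = rad(I_N + (f_1,...,f_s)). -/

import Mathlib

open MvPolynomial

/-- The integer kernel of an integer matrix. -/
def kerZ {m n : ℕ} (M : Matrix (Fin m) (Fin n) ℤ) : Set (Fin n → ℤ) :=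
  {u | M.mulVec u = 0}

/-- The binomial `x^{u₊} - x^{u₋}` associated to an integer vector `u`. -/
noncomputable def binom {n : ℕ} (K : Type*) [Field K] (u : Fin n → ℤ) :
    MvPolynomial (Fin n) K :=
  monomial (Finsupp.equivFunOnFinite.symm fun i => (u i).toNat) 1 -
    monomial (Finsupp.equivFunOnFinite.symm fun i => (-u i).toNat) 1

/-- The toric ideal of an integer matrix. -/
noncomputable def toricIdeal (K : Type*) [Field K] {m n : ℕ}
    (M : Matrix (Fin m) (Fin n) ℤ) : Ideal (MvPolynomial (Fin n) K) :=
  Ideal.span (binom K '' kerZ M)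

/-! ### Auxiliary machinery: the toric ideal is the kernel of a monomial map into a
Laurent monoid algebra, hence prime, hence radical. -/

private lemma single_prod {K : Type*} [Field K] {G : Type*} [AddCommMonoid G] {ι : Type*}
    (s : Finset ι) (a : ι → G) :
    ∏ i ∈ s, AddMonoidAlgebra.single (a i) (1 : K) = AddMonoidAlgebra.single (∑ i ∈ s, a i) 1 := by
  classical
  induction s using Finset.induction_on with
  | empty => simp [AddMonoidAlgebra.one_def]
  | insert _ _ h ih =>
    rw [Finset.prod_insert h, Finset.sum_insert h, ih, AddMonoidAlgebra.single_mul_single, one_mul]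

/-- The monomial map into the Laurent monoid algebra. -/
noncomputable def psiMap (K : Type*) [Field K] {m n : ℕ} (M : Matrix (Fin m) (Fin n) ℤ) :
    MvPolynomial (Fin n) K →ₐ[K] AddMonoidAlgebra K (Fin m → ℤ) :=
  aeval fun i => AddMonoidAlgebra.single (fun j => M j i) 1

/-- The weight of a monomial exponent vector. -/
def wt {m n : ℕ} (M : Matrix (Fin m) (Fin n) ℤ) (d : Fin n →₀ ℕ) : Fin m → ℤ :=
  M.mulVec fun i => (d i : ℤ)

lemma psiMap_monomial (K : Type*) [Field K] {m n : ℕ} (M : Matrix (Fin m) (Fin n) ℤ)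
    (d : Fin n →₀ ℕ) (c : K) :
    psiMap K M (monomial d c) = AddMonoidAlgebra.single (wt M d) c := by
  classical
  rw [psiMap, aeval_monomial]
  have h1 : (d.prod fun i k => AddMonoidAlgebra.single (fun j => M j i) (1:K) ^ k)
      = AddMonoidAlgebra.single (wt M d) 1 := by
    rw [Finsupp.prod]
    rw [Finset.prod_congr rfl (fun i _ => by
      rw [AddMonoidAlgebra.single_pow, one_pow]), single_prod]
    congr 1
    funext j
    rw [Finset.sum_apply]
    rw [Finset.sum_subset (Finset.subset_univ d.support)
      (fun i _ hi => by simp [Finsupp.notMem_support_iff.mp hi])]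
    simp [wt, Matrix.mulVec, dotProduct, mul_comm]
  rw [h1, Algebra.algebraMap_eq_smul_one, smul_mul_assoc, one_mul,
    AddMonoidAlgebra.smul_single', mul_one]

lemma monomial_sub_mem {K : Type*} [Field K] {m n : ℕ} {M : Matrix (Fin m) (Fin n) ℤ}
    {d1 d0 : Fin n →₀ ℕ} (hw : wt M d1 = wt M d0) :
    monomial d1 (1:K) - monomial d0 1 ∈ toricIdeal K M := by
  classical
  set u : Fin n → ℤ := fun i => (d1 i : ℤ) - (d0 i : ℤ) with hu
  have hker : u ∈ kerZ M := by
    have : M.mulVec u = M.mulVec (fun i => (d1 i : ℤ)) - M.mulVec (fun i => (d0 i : ℤ)) := by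
      rw [← Matrix.mulVec_sub]; rfl
    simp only [kerZ, Set.mem_setOf_eq, this]
    rw [show M.mulVec (fun i => (d1 i : ℤ)) = wt M d1 from rfl,
      show M.mulVec (fun i => (d0 i : ℤ)) = wt M d0 from rfl, hw, sub_self]
  have hmem : binom K u ∈ toricIdeal K M := Ideal.subset_span ⟨u, hker, rfl⟩
  set c : Fin n →₀ ℕ := Finsupp.equivFunOnFinite.symm (fun i => min (d1 i) (d0 i)) with hc
  have key : monomial c (1:K) * binom K u = monomial d1 1 - monomial d0 1 := by
    have e1 : c + (Finsupp.equivFunOnFinite.symm fun i => (u i).toNat) = d1 := by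
      ext i
      simp only [Finsupp.add_apply, hc, Finsupp.coe_equivFunOnFinite_symm, hu]
      rw [Int.toNat_sub]
      omega
    have e2 : c + (Finsupp.equivFunOnFinite.symm fun i => (-u i).toNat) = d0 := by
      ext i
      simp only [Finsupp.add_apply, hc, Finsupp.coe_equivFunOnFinite_symm, hu, neg_sub]
      rw [Int.toNat_sub]
      omega
    rw [binom, mul_sub, monomial_mul, monomial_mul, mul_one, e1, e2]
  rw [← key]
  exact Ideal.mul_mem_left _ _ hmem

section KerPsi
variable {K : Type*} [Field K] {m n : ℕ} {M : Matrix (Fin m) (Fin n) ℤ}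

lemma toric_le_ker : toricIdeal K M ≤ RingHom.ker (psiMap K M) := by
  rw [toricIdeal, Ideal.span_le]
  rintro _ ⟨u, hu, rfl⟩
  have hw : wt M (Finsupp.equivFunOnFinite.symm fun i => (u i).toNat)
      = wt M (Finsupp.equivFunOnFinite.symm fun i => (-u i).toNat) := by
    have : (fun i => ((Finsupp.equivFunOnFinite.symm fun i => (u i).toNat) i : ℤ))
        - (fun i => ((Finsupp.equivFunOnFinite.symm fun i => (-u i).toNat) i : ℤ)) = u := by
      funext i
      simp only [Pi.sub_apply, Finsupp.coe_equivFunOnFinite_symm]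
      omega
    have h2 := congrArg M.mulVec this
    rw [Matrix.mulVec_sub] at h2
    have h3 : M.mulVec u = 0 := hu
    rw [h3] at h2
    exact sub_eq_zero.mp h2
  simp only [SetLike.mem_coe, RingHom.mem_ker, binom, map_sub, psiMap_monomial, hw, sub_self]

lemma ker_le_toric_aux (k : ℕ) : ∀ g : MvPolynomial (Fin n) K, g.support.card ≤ k →
    psiMap K M g = 0 → g ∈ toricIdeal K M := by
  classical
  induction k with
  | zero =>
    intro g hg _
    have : g = 0 := support_eq_empty.mp (Finset.card_eq_zero.mp (Nat.le_zero.mp hg))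
    simp [this]
  | succ k ih =>
    intro g hcard hg
    by_cases h0 : g = 0
    · simp [h0]
    obtain ⟨d0, hd0⟩ := support_nonempty.mpr h0
    have expand : psiMap K M g = ∑ d ∈ g.support, AddMonoidAlgebra.single (wt M d) (coeff d g) := by
      conv_lhs => rw [g.as_sum]
      rw [map_sum]
      exact Finset.sum_congr rfl fun d _ => psiMap_monomial K M d (coeff d g)
    have fib : ∃ d1 ∈ g.support, d1 ≠ d0 ∧ wt M d1 = wt M d0 := by
      by_contra hcon
      push_neg at hcon
      have h1 : (psiMap K M g).coeff (wt M d0) = coeff d0 g := by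
        rw [expand, AddMonoidAlgebra.coeff_sum, Finsupp.finset_sum_apply]
        rw [Finset.sum_eq_single d0]
        · simp [AddMonoidAlgebra.coeff_single, Finsupp.single_apply]
        · intro d hd hne
          rw [AddMonoidAlgebra.coeff_single, Finsupp.single_apply, if_neg (hcon d hd hne)]
        · intro habs; exact absurd hd0 habs
      rw [hg] at h1
      exact absurd h1.symm (mem_support_iff.mp hd0)
    obtain ⟨d1, hd1, hne, hw⟩ := fib
    set c := coeff d1 g with hcdef
    set q := c • (monomial d1 (1:K) - monomial d0 1) with hq
    have hqmem : q ∈ toricIdeal K M := by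
      rw [hq, smul_eq_C_mul]; exact Ideal.mul_mem_left _ _ (monomial_sub_mem hw)
    have hqker : psiMap K M q = 0 := by
      rw [hq, map_smul, map_sub, psiMap_monomial, psiMap_monomial, hw, sub_self, smul_zero]
    set h := g - q with hh
    have hhker : psiMap K M h = 0 := by rw [hh, map_sub, hg, hqker, sub_self]
    have hsupp : h.support ⊆ g.support.erase d1 := by
      intro e he
      rw [Finset.mem_erase]
      have hce := mem_support_iff.mp he
      constructor
      · intro habs
        apply hce
        rw [habs, hh, hq, coeff_sub, coeff_smul, coeff_sub, coeff_monomial, coeff_monomial,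
          if_pos rfl, if_neg (Ne.symm hne)]
        simp [hcdef]
      · by_contra habs
        apply hce
        have hed1 : e ≠ d1 := by rintro rfl; exact habs hd1
        have hed0 : e ≠ d0 := by rintro rfl; exact habs hd0
        rw [mem_support_iff] at habs
        push_neg at habs
        rw [hh, hq, coeff_sub, coeff_smul, coeff_sub, coeff_monomial, coeff_monomial,
          if_neg (Ne.symm hed1), if_neg (Ne.symm hed0), habs]
        simp
    have hcard2 : h.support.card ≤ k := by
      have := Finset.card_le_card hsupp
      rw [Finset.card_erase_of_mem hd1] at this
      have hpos : 1 ≤ g.support.card := Finset.card_pos.mpr ⟨d1, hd1⟩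
      omega
    have hhmem : h ∈ toricIdeal K M := ih h hcard2 hhker
    have : g = h + q := by rw [hh]; ring
    rw [this]
    exact Ideal.add_mem _ hhmem hqmem

lemma toric_eq_ker : toricIdeal K M = RingHom.ker (psiMap K M) := by
  refine le_antisymm toric_le_ker ?_
  intro g hg
  exact ker_le_toric_aux g.support.card g le_rfl hg

lemma toric_radical : (toricIdeal K M).radical = toricIdeal K M := by
  haveI : IsDomain (AddMonoidAlgebra K (Fin m → ℤ)) := NoZeroDivisors.to_isDomain _
  rw [toric_eq_ker]
  exact (RingHom.ker_isPrime (psiMap K M)).radical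

end KerPsi

/-! ### Auxiliary machinery: Nullstellensatz over the algebraic closure. -/

/-- Contraction of extended ideals along a field extension of polynomial rings. -/
lemma contract_map {K L : Type*} [Field K] [Field L] [Algebra K L] {n : ℕ}
    (J : Ideal (MvPolynomial (Fin n) K)) (g : MvPolynomial (Fin n) K)
    (hg : MvPolynomial.map (algebraMap K L) g ∈
      J.map (MvPolynomial.map (algebraMap K L) : MvPolynomial (Fin n) K →+* MvPolynomial (Fin n) L)) :
    g ∈ J := by
  classical
  obtain ⟨π, hπ⟩ := LinearMap.exists_leftInverse_of_injective (Algebra.linearMap K L)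
    (LinearMap.ker_eq_bot.mpr (algebraMap K L).injective)
  have hπ1 : ∀ c : K, π (algebraMap K L c) = c := fun c => LinearMap.congr_fun hπ c
  set P : MvPolynomial (Fin n) L → MvPolynomial (Fin n) K :=
    fun q => ∑ d ∈ q.support, monomial d (π (coeff d q)) with hP
  have hcoeff : ∀ (q : MvPolynomial (Fin n) L) (e : Fin n →₀ ℕ), coeff e (P q) = π (coeff e q) := by
    intro q e
    rw [hP]
    simp only [coeff_sum, coeff_monomial]
    rw [Finset.sum_ite_eq' q.support e (fun d => π (coeff d q))]
    split_ifs with hmem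
    · rfl
    · rw [notMem_support_iff.mp hmem, map_zero]
  have hadd : ∀ a b, P (a + b) = P a + P b := by
    intro a b
    apply MvPolynomial.ext
    intro e
    rw [coeff_add, hcoeff, hcoeff, hcoeff, coeff_add, map_add]
  have hPmap : ∀ p : MvPolynomial (Fin n) K, P (MvPolynomial.map (algebraMap K L) p) = p := by
    intro p
    apply MvPolynomial.ext
    intro e
    rw [hcoeff, coeff_map, hπ1]
  have hmul : ∀ (q : MvPolynomial (Fin n) L) (p : MvPolynomial (Fin n) K),
      P (q * MvPolynomial.map (algebraMap K L) p) = P q * p := by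
    intro q p
    induction q using MvPolynomial.induction_on' with
    | add a b iha ihb => rw [add_mul, hadd, iha, ihb, hadd, add_mul]
    | monomial d c =>
      apply MvPolynomial.ext
      intro e
      have hPm : P (monomial d c) = monomial d (π c) := by
        apply MvPolynomial.ext
        intro e'
        rw [hcoeff, coeff_monomial, coeff_monomial]
        split_ifs
        · rfl
        · rw [map_zero]
      rw [hPm, hcoeff, coeff_monomial_mul', coeff_monomial_mul']
      split_ifs
      · rw [coeff_map, show c * algebraMap K L (coeff (e - d) p) = coeff (e - d) p • c from by
          rw [Algebra.smul_def]; ring, map_smul, smul_eq_mul]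
        ring
      · rw [map_zero]
  have hzero : P 0 = 0 := by
    apply MvPolynomial.ext
    intro e
    rw [hcoeff]
    simp
  have hsum : ∀ {ι : Type _} (S : Finset ι) (F : ι → MvPolynomial (Fin n) L),
      P (∑ x ∈ S, F x) = ∑ x ∈ S, P (F x) := by
    intro ι S F
    induction S using Finset.induction_on with
    | empty => simpa using hzero
    | insert _ _ hx ih => rw [Finset.sum_insert hx, Finset.sum_insert hx, hadd, ih]
  rw [Ideal.map, Ideal.span, Submodule.mem_span_set] at hg
  obtain ⟨c, hcsupp, hcsum⟩ := hg
  have : g = ∑ a ∈ c.support, P (c a * a) := by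
    rw [← hPmap g, ← hcsum, Finsupp.sum, hsum]
    exact Finset.sum_congr rfl fun a _ => by rw [smul_eq_mul]
  rw [this]
  apply Ideal.sum_mem
  intro a ha
  obtain ⟨p, hpJ, hpa⟩ := hcsupp ha
  rw [← hpa, hmul]
  exact Ideal.mul_mem_left _ _ hpJ

lemma mem_radical_of_vanishing {K : Type*} [Field K] {n : ℕ}
    (J : Ideal (MvPolynomial (Fin n) K)) (g : MvPolynomial (Fin n) K)
    (hv : ∀ x : Fin n → AlgebraicClosure K, (∀ p ∈ J, aeval x p = 0) → aeval x g = 0) :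
    g ∈ J.radical := by
  set L := AlgebraicClosure K
  set fbar : MvPolynomial (Fin n) K →+* MvPolynomial (Fin n) L :=
    (MvPolynomial.map (algebraMap K L)) with hfbar
  set J' := J.map fbar with hJ'
  have h1 : fbar g ∈ vanishingIdeal L (zeroLocus L J') := by
    rw [mem_vanishingIdeal_iff]
    intro x hx
    rw [mem_zeroLocus_iff] at hx
    have : ∀ p ∈ J, aeval x p = 0 := by
      intro p hp
      rw [aeval_def, ← eval_map]
      exact hx _ (Ideal.mem_map_of_mem fbar hp)
    have := hv x this
    rwa [aeval_def, ← eval_map] at this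
  rw [vanishingIdeal_zeroLocus_eq_radical, Ideal.mem_radical_iff] at h1
  obtain ⟨r, hr⟩ := h1
  rw [← map_pow] at hr
  exact Ideal.mem_radical_iff.mpr ⟨r, contract_map J (g ^ r) hr⟩

theorem stmt18 (K : Type*) [Field K] {l m n s : ℕ}
    (N : Matrix (Fin l) (Fin n) ℕ) (M : Matrix (Fin m) (Fin n) ℤ)
    (h : kerZ (N.map (Nat.cast : ℕ → ℤ)) ⊆ kerZ M)
    (φ : MvPolynomial (Fin n) K →ₐ[K] MvPolynomial (Fin l) K)
    (hφ : φ = aeval fun i : Fin n => ∏ j : Fin l, X j ^ N j i)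
    (hker : RingHom.ker φ = toricIdeal K (N.map (Nat.cast : ℕ → ℤ)))
    (f : Fin s → MvPolynomial (Fin n) K)
    (hf : ∀ i, f i ∈ toricIdeal K M)
    (hrad : (Ideal.map φ (toricIdeal K M)).radical =
      (Ideal.span (Set.range fun i => φ (f i))).radical)
    (hΓ : {x : Fin n → AlgebraicClosure K |
            ∃ T : Fin l → AlgebraicClosure K, ∀ i, x i = ∏ j, T j ^ N j i} =
          {x : Fin n → AlgebraicClosure K |
            ∀ g ∈ toricIdeal K (N.map (Nat.cast : ℕ → ℤ)), aeval x g = 0}) :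
    toricIdeal K M =
      (toricIdeal K (N.map (Nat.cast : ℕ → ℤ)) ⊔ Ideal.span (Set.range f)).radical := by
  classical
  apply le_antisymm
  · -- toricIdeal K M ≤ radical
    intro g hg
    apply mem_radical_of_vanishing
    intro x hx
    have hxN : ∀ p ∈ toricIdeal K (N.map (Nat.cast : ℕ → ℤ)), aeval x p = 0 :=
      fun p hp => hx p (Ideal.mem_sup_left hp)
    have hxΓ : x ∈ {x : Fin n → AlgebraicClosure K |
        ∃ T : Fin l → AlgebraicClosure K, ∀ i, x i = ∏ j, T j ^ N j i} := by
      rw [hΓ]; exact hxN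
    obtain ⟨T, hT⟩ := hxΓ
    have hcomp : ∀ q : MvPolynomial (Fin n) K, aeval T (φ q) = aeval x q := by
      intro q
      rw [hφ, ← AlgHom.comp_apply, comp_aeval]
      have hfun : (fun i => aeval T (∏ j : Fin l, (X j : MvPolynomial (Fin l) K) ^ N j i)) = x := by
        funext i
        rw [map_prod]
        simp only [map_pow, aeval_X]
        exact (hT i).symm
      rw [hfun]
    have hTf : ∀ p ∈ Ideal.span (Set.range fun i => φ (f i)), aeval T p = 0 := by
      intro p hp
      have hle : Ideal.span (Set.range fun i => φ (f i)) ≤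
          RingHom.ker (aeval T : MvPolynomial (Fin l) K →ₐ[K] AlgebraicClosure K) := by
        rw [Ideal.span_le]
        rintro _ ⟨i, rfl⟩
        rw [SetLike.mem_coe, RingHom.mem_ker, hcomp]
        exact hx (f i) (Ideal.mem_sup_right (Ideal.subset_span ⟨i, rfl⟩))
      exact hle hp
    have hφg : φ g ∈ (Ideal.span (Set.range fun i => φ (f i))).radical := by
      rw [← hrad]
      exact Ideal.le_radical (Ideal.mem_map_of_mem φ hg)
    obtain ⟨r, hr⟩ := Ideal.mem_radical_iff.mp hφg
    have hTr := hTf _ hr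
    rw [map_pow] at hTr
    have hr0 : r ≠ 0 := by
      rintro rfl
      rw [pow_zero] at hTr
      exact one_ne_zero hTr
    rw [← hcomp g]
    exact (pow_eq_zero_iff hr0).mp hTr
  · -- radical ≤ toricIdeal K M
    have hsub : toricIdeal K (N.map (Nat.cast : ℕ → ℤ)) ⊔ Ideal.span (Set.range f) ≤
        toricIdeal K M := by
      apply sup_le
      · exact Ideal.span_mono (Set.image_mono h)
      · rw [Ideal.span_le]
        rintro _ ⟨i, rfl⟩
        exact hf i
    calc (toricIdeal K (N.map (Nat.cast : ℕ → ℤ)) ⊔ Ideal.span (Set.range f)).radical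
        ≤ (toricIdeal K M).radical := Ideal.radical_mono hsub
      _ = toricIdeal K M := toric_radical
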